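/- arXiv:1312.7730 — 2 statements merged into one kernel-verified Lean document; each statement's English description precedes it below -/
import Mathlib

section
/- Let X be a normed space, F a nonempty closed bounded convex subset with F ≠ {0}, f: X → (-∞,∞] center-Lipschitz on dom f at x̄ with constant ℓ, 0 ≤ ℓ < ‖F‖^{-1}, and T(x) = inf{ρ_F(y−x)+f(y) : y ∈ X} with T(x̄) = f(x̄) finite. Then for every s > 0, ∂_s T(x̄) = ∂_s f(x̄) ∩ {x* ∈ X* : sup_{u∈F} ⟨−x*, u⟩ ≤ 1}. -/
noncomputable section
open Filter Topology

variable {X : Type*} [NormedAddCommGroup X] [NormedSpace ℝ X]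

/-- ε-Fréchet subdifferential of g : X → EReal at x₀, as a set of continuous linear functionals. -/
def eFrechetSub (ε : ℝ) (g : X → EReal) (x₀ : X) : Set (X →L[ℝ] ℝ) :=
  {p | (-(ε : EReal)) ≤ liminf (fun x =>
      (g x - g x₀ - ((p (x - x₀) : ℝ) : EReal)) * ((‖x - x₀‖⁻¹ : ℝ) : EReal)) (𝓝[≠] x₀)}

/-- s-Hölder subdifferential of g at x₀. -/
def holderSub (s : ℝ) (g : X → EReal) (x₀ : X) : Set (X →L[ℝ] ℝ) :=
  {p | (⊥ : EReal) < liminf (fun x =>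
      (g x - g x₀ - ((p (x - x₀) : ℝ) : EReal)) * (((‖x - x₀‖ ^ (1 + s))⁻¹ : ℝ) : EReal)) (𝓝[≠] x₀)}

/-- Infimal convolution T(x) = inf_y (φ(y - x) + f(y)). -/
def infConv (φ f : X → EReal) : X → EReal := fun x => ⨅ y, (φ (y - x) + f y)

/-- Minkowski gauge ρ_F(x) = inf {t ≥ 0 : x ∈ tF}, with inf ∅ = +∞. -/
def gauge' (F : Set X) : X → EReal := fun x =>
  sInf {r : EReal | ∃ t : ℝ, 0 ≤ t ∧ (∃ u ∈ F, x = t • u) ∧ r = (t : EReal)}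

open Classical in
def eIndicator (Ω : Set X) : X → EReal := fun x => if x ∈ Ω then (0 : EReal) else ⊤

/-- Convexity for extended-real-valued functions. -/
def ERealConvexOn (g : X → EReal) : Prop :=
  ∀ x y : X, ∀ t : ℝ, 0 ≤ t → t ≤ 1 →
    g (t • x + (1 - t) • y) ≤ ((t : ℝ) : EReal) * g x + (((1 - t : ℝ)) : EReal) * g y

lemma gauge'_lb {F : Set X} {v : X} {c : ℝ}
    (h : ∀ t : ℝ, 0 ≤ t → ∀ u ∈ F, v = t • u → c ≤ t) : (c : EReal) ≤ gauge' F v := by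
  refine le_sInf ?_
  rintro r ⟨t, ht, ⟨u, hu, rfl⟩, rfl⟩
  exact EReal.coe_le_coe_iff.mpr (h t ht u hu rfl)

lemma gauge'_le {F : Set X} {t : ℝ} (ht : 0 ≤ t) {u : X} (hu : u ∈ F) :
    gauge' F (t • u) ≤ (t : EReal) :=
  sInf_le ⟨t, ht, ⟨u, hu, rfl⟩, rfl⟩

lemma infConv_le (φ f : X → EReal) (x y : X) : infConv φ f x ≤ φ (y - x) + f y :=
  iInf_le _ y

lemma le_infConv {φ f : X → EReal} {x : X} {c : EReal}
    (h : ∀ y, c ≤ φ (y - x) + f y) : c ≤ infConv φ f x :=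
  le_iInf h

lemma ereal_le_of_le_mul_inv {A : EReal} {r b : ℝ} (hb : 0 < b) (hA : A ≠ ⊥)
    (h : (r : EReal) ≤ A * ((b⁻¹ : ℝ) : EReal)) : ((r * b : ℝ) : EReal) ≤ A := by
  induction A with
  | bot => exact absurd rfl hA
  | coe a =>
      rw [← EReal.coe_mul, EReal.coe_le_coe_iff] at h
      rw [EReal.coe_le_coe_iff]
      rw [← le_div_iff₀ hb]
      simpa [div_eq_mul_inv] using h
  | top => exact le_top

lemma ereal_le_mul_inv {A : EReal} {K b : ℝ} (hb : 0 < b)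
    (h : ((K * b : ℝ) : EReal) ≤ A) : (K : EReal) ≤ A * ((b⁻¹ : ℝ) : EReal) := by
  induction A with
  | bot => exact absurd (le_bot_iff.mp h) (EReal.coe_ne_bot _)
  | coe a =>
      rw [← EReal.coe_mul, EReal.coe_le_coe_iff]
      rw [EReal.coe_le_coe_iff] at h
      rw [← div_eq_mul_inv, le_div_iff₀ hb]
      exact h
  | top =>
      rw [EReal.top_mul_of_pos (by exact_mod_cast inv_pos.mpr hb)]
      exact le_top

lemma ereal_sub_sub (a : EReal) (b c : ℝ) :
    a - (b : EReal) - (c : EReal) = a - (((b + c : ℝ)) : EReal) := by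
  rw [sub_eq_add_neg, sub_eq_add_neg, sub_eq_add_neg, add_assoc]
  norm_cast
  ring_nf

lemma ereal_sub_coe_ne_bot {a : EReal} (ha : a ≠ ⊥) (c : ℝ) : a - (c : EReal) ≠ ⊥ := by
  rw [sub_eq_add_neg, ← EReal.coe_neg]
  intro h
  rcases EReal.add_eq_bot_iff.mp h with h' | h'
  · exact ha h'
  · exact EReal.coe_ne_bot _ h'

set_option maxHeartbeats 1200000 in
theorem stmt17 (F : Set X) (hne : F.Nonempty) (hcl : IsClosed F)
    (hbd : Bornology.IsBounded F) (hconv : Convex ℝ F) (hnz : F ≠ {0})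
    (f : X → EReal) (hfbot : ∀ x, f x ≠ ⊥)
    (x₀ : X) (ℓ : ℝ) (hℓ0 : 0 ≤ ℓ) (hℓm : ℓ < (sSup ((fun u => ‖u‖) '' F))⁻¹)
    (hlip : ∀ x : X, f x ≠ ⊤ → |(f x).toReal - (f x₀).toReal| ≤ ℓ * ‖x - x₀‖)
    (hdom : infConv (gauge' F) f x₀ ≠ ⊤) (hS : infConv (gauge' F) f x₀ = f x₀) :
    ∀ s : ℝ, 0 < s →
      holderSub s (infConv (gauge' F) f) x₀
        = holderSub s f x₀ ∩ {p : X →L[ℝ] ℝ | ∀ u ∈ F, -p u ≤ 1} := by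
  intro s hs
  set M : ℝ := sSup ((fun u => ‖u‖) '' F) with hMdef
  have hMpos : 0 < M := inv_pos.mp (lt_of_le_of_lt hℓ0 hℓm)
  have hMinv : 0 < M⁻¹ := inv_pos.mpr hMpos
  have hbdd : BddAbove ((fun u => ‖u‖) '' F) := by
    obtain ⟨C, hC⟩ := isBounded_iff_forall_norm_le.mp hbd
    exact ⟨C, by rintro _ ⟨u, hu, rfl⟩; exact hC u hu⟩
  have hMbd : ∀ u ∈ F, ‖u‖ ≤ M := fun u hu => le_csSup hbdd ⟨u, hu, rfl⟩
  have hfx₀top : f x₀ ≠ ⊤ := hS ▸ hdom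
  set A : ℝ := (f x₀).toReal with hAdef
  have hfx₀ : f x₀ = (A : EReal) := (EReal.coe_toReal hfx₀top (hfbot x₀)).symm
  have hflb : ∀ y : X, ((A - ℓ * ‖y - x₀‖ : ℝ) : EReal) ≤ f y := by
    intro y
    by_cases hy : f y = ⊤
    · rw [hy]; exact le_top
    · have h1 := hlip y hy
      rw [abs_le] at h1
      have h2 : f y = ((f y).toReal : EReal) := (EReal.coe_toReal hy (hfbot y)).symm
      rw [h2]
      exact EReal.coe_le_coe_iff.mpr (by linarith [h1.1])
  have hg_norm : ∀ v : X, ((M⁻¹ * ‖v‖ : ℝ) : EReal) ≤ gauge' F v := by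
    intro v
    apply gauge'_lb
    intro t ht u hu hv
    have h1 : ‖v‖ = t * ‖u‖ := by rw [hv, norm_smul, Real.norm_eq_abs, abs_of_nonneg ht]
    have h2 : t * ‖u‖ ≤ t * M := mul_le_mul_of_nonneg_left (hMbd u hu) ht
    have h3 : M⁻¹ * (t * M) = t := by field_simp
    rw [h1]
    nlinarith [hMinv.le]
  have hterm_lb : ∀ x y : X,
      ((A - M⁻¹ * ‖x - x₀‖ : ℝ) : EReal) ≤ gauge' F (y - x) + f y := by
    intro x y
    refine le_trans ?_ (add_le_add (hg_norm (y - x)) (hflb y))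
    rw [← EReal.coe_add]
    apply EReal.coe_le_coe_iff.mpr
    have h4 : ‖y - x₀‖ - ‖x - x₀‖ ≤ ‖y - x‖ := by
      have := norm_add_le (y - x) (x - x₀)
      simp only [sub_add_sub_cancel] at this
      linarith
    have h5 : ℓ * ‖y - x₀‖ ≤ M⁻¹ * ‖y - x₀‖ :=
      mul_le_mul_of_nonneg_right hℓm.le (norm_nonneg _)
    nlinarith [mul_le_mul_of_nonneg_left h4 hMinv.le]
  have hT_lb : ∀ x : X, ((A - M⁻¹ * ‖x - x₀‖ : ℝ) : EReal) ≤ infConv (gauge' F) f x :=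
    fun x => le_infConv (hterm_lb x)
  have hT_ne_bot : ∀ x, infConv (gauge' F) f x ≠ ⊥ := by
    intro x h
    exact EReal.coe_ne_bot _ (le_bot_iff.mp (h ▸ hT_lb x))
  have hTle : ∀ x, infConv (gauge' F) f x ≤ f x := by
    intro x
    obtain ⟨u, hu⟩ := hne
    have h0 : gauge' F (x - x) ≤ (0 : EReal) := by
      have : x - x = (0 : ℝ) • u := by simp
      rw [this]
      exact_mod_cast gauge'_le le_rfl hu
    calc infConv (gauge' F) f x ≤ gauge' F (x - x) + f x := infConv_le _ _ _ _
      _ ≤ 0 + f x := add_le_add h0 le_rfl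
      _ = f x := zero_add _
  ext p
  simp only [holderSub, Set.mem_setOf_eq, Set.mem_inter_iff]
  constructor
  · intro hp
    have hcon : ∀ u ∈ F, -p u ≤ 1 := by
      intro u hu
      by_cases hu0 : u = 0
      · simp [hu0]
      by_contra hcon1
      push_neg at hcon1
      obtain ⟨r, -, hr2⟩ := EReal.exists_between_coe_real hp
      have hev := Filter.eventually_lt_of_lt_liminf hr2
      obtain ⟨δ, hδ, hball⟩ := Metric.mem_nhdsWithin_iff.mp hev
      have hu' : (0:ℝ) < ‖u‖ := norm_pos_iff.mpr hu0
      have hεpos : (0:ℝ) < -(1 + p u) := by linarith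
      set ε : ℝ := -(1 + p u) with hεdef
      have hup : (0:ℝ) < ‖u‖ ^ (1 + s) := Real.rpow_pos_of_pos hu' _
      have hD : (0:ℝ) < 2 * (|r| + 1) * ‖u‖ ^ (1 + s) := by positivity
      have hXpos : 0 < ε / (2 * (|r| + 1) * ‖u‖ ^ (1 + s)) := div_pos hεpos hD
      set t₁ : ℝ := (ε / (2 * (|r| + 1) * ‖u‖ ^ (1 + s))) ^ (s⁻¹) with ht₁def
      have ht₁pos : 0 < t₁ := Real.rpow_pos_of_pos hXpos _
      have ht₁s : t₁ ^ s = ε / (2 * (|r| + 1) * ‖u‖ ^ (1 + s)) := by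
        rw [ht₁def, ← Real.rpow_mul hXpos.le, inv_mul_cancel₀ (ne_of_gt hs), Real.rpow_one]
      set t : ℝ := min t₁ (δ / (2 * ‖u‖)) with htdef
      have ht0 : 0 < t := lt_min ht₁pos (div_pos hδ (by positivity))
      set x : X := x₀ - t • u with hxdef
      have hxx₀ : x - x₀ = -(t • u) := by rw [hxdef]; abel
      have hnx : ‖x - x₀‖ = t * ‖u‖ := by
        rw [hxx₀, norm_neg, norm_smul, Real.norm_eq_abs, abs_of_pos ht0]
      have hxne : x ≠ x₀ := by
        intro h
        rw [h, sub_self, norm_zero] at hnx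
        nlinarith
      have hmem : x ∈ Metric.ball x₀ δ ∩ {x₀}ᶜ := by
        refine ⟨?_, hxne⟩
        rw [Metric.mem_ball, dist_eq_norm, hnx]
        have h7 : t ≤ δ / (2 * ‖u‖) := min_le_right _ _
        have h8 : t * ‖u‖ ≤ δ / 2 := by
          calc t * ‖u‖ ≤ (δ / (2 * ‖u‖)) * ‖u‖ := mul_le_mul_of_nonneg_right h7 hu'.le
            _ = δ / 2 := by field_simp
        linarith
      have hQ := hball hmem
      simp only [Set.mem_setOf_eq] at hQ
      set b : ℝ := ‖x - x₀‖ ^ (1 + s) with hbdef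
      have hbpos : 0 < b := Real.rpow_pos_of_pos (by rw [hnx]; positivity) _
      have hNbot : infConv (gauge' F) f x - infConv (gauge' F) f x₀
          - ((p (x - x₀) : ℝ) : EReal) ≠ ⊥ := by
        apply ereal_sub_coe_ne_bot
        rw [hS, hfx₀]
        exact ereal_sub_coe_ne_bot (hT_ne_bot x) A
      have hnum := ereal_le_of_le_mul_inv hbpos hNbot hQ.le
      have hx₀x : x₀ - x = t • u := by rw [hxdef]; abel
      have hTxle : infConv (gauge' F) f x ≤ ((t + A : ℝ) : EReal) := by
        calc infConv (gauge' F) f x ≤ gauge' F (x₀ - x) + f x₀ := infConv_le _ _ _ _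
          _ ≤ (t : EReal) + (A : EReal) := by
              rw [hx₀x, hfx₀]; exact add_le_add (gauge'_le ht0.le hu) le_rfl
          _ = ((t + A : ℝ) : EReal) := by norm_cast
      have hpx : p (x - x₀) = -(t * p u) := by
        rw [hxx₀, map_neg, map_smul, smul_eq_mul]
      have hnum2 : ((r * b : ℝ) : EReal) ≤ ((t + A - A - (-(t * p u)) : ℝ) : EReal) := by
        refine hnum.trans ?_
        rw [hS, hfx₀, hpx]
        have h9 := EReal.sub_le_sub
          (EReal.sub_le_sub hTxle (le_refl ((A : ℝ) : EReal)))
          (le_refl ((-(t * p u) : ℝ) : EReal))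
        exact h9.trans_eq (by norm_cast)
      rw [EReal.coe_le_coe_iff] at hnum2
      -- real contradiction
      have hb' : b = t ^ (1 + s) * ‖u‖ ^ (1 + s) := by
        rw [hbdef, hnx, Real.mul_rpow ht0.le (norm_nonneg u)]
      have ht1s : t ^ (1 + s) = t * t ^ s := by
        rw [Real.rpow_add ht0, Real.rpow_one]
      have hts : t ^ s ≤ t₁ ^ s := Real.rpow_le_rpow ht0.le (min_le_left _ _) hs.le
      have htspos : 0 < t ^ s := Real.rpow_pos_of_pos ht0 _
      have hkey : |r| * (t₁ ^ s * ‖u‖ ^ (1 + s)) ≤ ε / 2 := by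
        rw [ht₁s]
        have h9 : |r| * (ε / (2 * (|r| + 1) * ‖u‖ ^ (1 + s)) * ‖u‖ ^ (1 + s))
            = |r| * ε / (2 * (|r| + 1)) := by
          field_simp
        rw [h9, div_le_div_iff₀ (by positivity) (by norm_num : (0:ℝ) < 2)]
        nlinarith [abs_nonneg r, hεpos.le]
      have hq : t ^ s * ‖u‖ ^ (1 + s) ≤ t₁ ^ s * ‖u‖ ^ (1 + s) :=
        mul_le_mul_of_nonneg_right hts hup.le
      have hrble : -(t * (ε / 2)) ≤ r * b := by
        rw [hb', ht1s]
        have h10 : |r| * (t ^ s * ‖u‖ ^ (1 + s)) ≤ ε / 2 :=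
          le_trans (mul_le_mul_of_nonneg_left hq (abs_nonneg r)) hkey
        have hqpos : 0 < t ^ s * ‖u‖ ^ (1 + s) := mul_pos htspos hup
        nlinarith [mul_nonneg (by linarith [neg_abs_le r] : (0:ℝ) ≤ r + |r|)
            (mul_pos ht0 hqpos).le,
          mul_le_mul_of_nonneg_left h10 ht0.le]
      have hrhs : t + A - A - (-(t * p u)) = -(t * ε) := by rw [hεdef]; ring
      rw [hrhs] at hnum2
      nlinarith [mul_pos ht0 hεpos]
    refine ⟨?_, hcon⟩
    refine lt_of_lt_of_le hp (Filter.liminf_le_liminf (Filter.Eventually.of_forall fun x => ?_))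
    refine mul_le_mul_of_nonneg_right ?_ (EReal.coe_nonneg.mpr (by positivity))
    exact EReal.sub_le_sub (EReal.sub_le_sub (hTle x) hS.ge) le_rfl
  · rintro ⟨hpf, hcon⟩
    have hg_dual : ∀ v : X, ((-(p v) : ℝ) : EReal) ≤ gauge' F v := by
      intro v
      apply gauge'_lb
      intro t ht u hu hv
      rw [hv, map_smul, smul_eq_mul]
      nlinarith [hcon u hu]
    obtain ⟨r, -, hr2⟩ := EReal.exists_between_coe_real hpf
    set r0 : ℝ := min r 0 with hr0def
    have hr0 : r0 ≤ 0 := min_le_right _ _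
    have hr0r : r0 ≤ r := min_le_left _ _
    have hev := Filter.eventually_lt_of_lt_liminf hr2
    obtain ⟨δ₀, hδ₀, hball⟩ := Metric.mem_nhdsWithin_iff.mp hev
    have hNf : ∀ y : X, ‖y - x₀‖ < δ₀ →
        ((r0 * ‖y - x₀‖ ^ (1 + s) : ℝ) : EReal) ≤ f y - f x₀ - ((p (y - x₀) : ℝ) : EReal) := by
      intro y hy
      by_cases hyx : y = x₀
      · subst hyx
        rw [hfx₀, sub_self, norm_zero, Real.zero_rpow (by linarith), map_zero]
        simp [← EReal.coe_sub]
      · have hQ := hball ⟨by rw [Metric.mem_ball, dist_eq_norm]; exact hy, hyx⟩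
        simp only [Set.mem_setOf_eq] at hQ
        have hbpos : 0 < ‖y - x₀‖ ^ (1 + s) :=
          Real.rpow_pos_of_pos (norm_pos_iff.mpr (sub_ne_zero.mpr hyx)) _
        have hnb : f y - f x₀ - ((p (y - x₀) : ℝ) : EReal) ≠ ⊥ := by
          apply ereal_sub_coe_ne_bot
          rw [hfx₀]
          exact ereal_sub_coe_ne_bot (hfbot y) A
        have h1 := ereal_le_of_le_mul_inv hbpos hnb hQ.le
        refine le_trans ?_ h1
        exact EReal.coe_le_coe_iff.mpr (mul_le_mul_of_nonneg_right hr0r hbpos.le)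
    have hMℓ : 0 < M⁻¹ - ℓ := by linarith
    set c : ℝ := (M⁻¹ + ‖p‖ + 1) / (M⁻¹ - ℓ) with hcdef
    have hc : 0 < c := div_pos (by positivity) hMℓ
    have hcid : (M⁻¹ - ℓ) * c = M⁻¹ + ‖p‖ + 1 := by
      rw [hcdef, mul_comm, div_mul_cancel₀ _ (ne_of_gt hMℓ)]
    set K : ℝ := r0 * c ^ (1 + s) with hKdef
    have hcs : (0:ℝ) < c ^ (1 + s) := Real.rpow_pos_of_pos hc _
    have hK : K ≤ 0 := mul_nonpos_of_nonpos_of_nonneg hr0 hcs.le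
    set δ : ℝ := δ₀ / (c + 1) with hδdef
    have hδpos : 0 < δ := div_pos hδ₀ (by linarith)
    have hkey : ∀ x : X, x ≠ x₀ → ‖x - x₀‖ < δ →
        (K : EReal) ≤ (infConv (gauge' F) f x - infConv (gauge' F) f x₀
          - ((p (x - x₀) : ℝ) : EReal)) * (((‖x - x₀‖ ^ (1 + s))⁻¹ : ℝ) : EReal) := by
      intro x hx hxδ
      have ha : 0 < ‖x - x₀‖ := norm_pos_iff.mpr (sub_ne_zero.mpr hx)
      have hbpos : 0 < ‖x - x₀‖ ^ (1 + s) := Real.rpow_pos_of_pos ha _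
      apply ereal_le_mul_inv hbpos
      have hterm : ∀ y : X,
          ((K * ‖x - x₀‖ ^ (1 + s) + A + p (x - x₀) : ℝ) : EReal)
            ≤ gauge' F (y - x) + f y := by
        intro y
        by_cases hy : ‖y - x₀‖ ≤ c * ‖x - x₀‖
        · -- near case
          have hyδ₀ : ‖y - x₀‖ < δ₀ := by
            have : c * ‖x - x₀‖ < c * δ := by
              exact mul_lt_mul_of_pos_left hxδ hc
            have hcδ : c * δ < δ₀ := by
              rw [hδdef, ← mul_div_assoc, div_lt_iff₀ (by linarith)]
              nlinarith
            linarith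
          have h2 := hNf y hyδ₀
          rw [hfx₀, ereal_sub_sub] at h2
          have h3 := (EReal.le_sub_iff_add_le (Or.inl (EReal.coe_ne_bot _))
            (Or.inl (EReal.coe_ne_top _))).mp h2
          have h4 := add_le_add (hg_dual (y - x)) h3
          refine le_trans ?_ h4
          rw [← EReal.coe_add, ← EReal.coe_add]
          apply EReal.coe_le_coe_iff.mpr
          have hlin : p (x - x₀) = -(p (y - x)) + p (y - x₀) := by
            rw [← map_neg, ← map_add]
            congr 1
            abel
          have hr0b : K * ‖x - x₀‖ ^ (1 + s) ≤ r0 * ‖y - x₀‖ ^ (1 + s) := by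
            rw [hKdef]
            have h5 : ‖y - x₀‖ ^ (1 + s) ≤ (c * ‖x - x₀‖) ^ (1 + s) :=
              Real.rpow_le_rpow (norm_nonneg _) hy (by linarith)
            rw [Real.mul_rpow hc.le (norm_nonneg _)] at h5
            nlinarith
          linarith
        · -- far case
          push_neg at hy
          have h5 := add_le_add (hg_norm (y - x)) (hflb y)
          refine le_trans ?_ h5
          rw [← EReal.coe_add]
          apply EReal.coe_le_coe_iff.mpr
          have h6 : ‖y - x₀‖ - ‖x - x₀‖ ≤ ‖y - x‖ := by
            have := norm_add_le (y - x) (x - x₀)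
            simp only [sub_add_sub_cancel] at this
            linarith
          have h7 : p (x - x₀) ≤ ‖p‖ * ‖x - x₀‖ := by
            have h8 := p.le_opNorm (x - x₀)
            rw [Real.norm_eq_abs] at h8
            exact le_trans (le_abs_self _) h8
          have h9 : K * ‖x - x₀‖ ^ (1 + s) ≤ 0 :=
            mul_nonpos_of_nonpos_of_nonneg hK hbpos.le
          have h10 : (M⁻¹ - ℓ) * (c * ‖x - x₀‖) ≤ (M⁻¹ - ℓ) * ‖y - x₀‖ :=
            mul_le_mul_of_nonneg_left hy.le hMℓ.le
          rw [← mul_assoc, hcid] at h10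
          nlinarith [mul_le_mul_of_nonneg_left h6 hMinv.le]
      have h1 : ((K * ‖x - x₀‖ ^ (1 + s) + A + p (x - x₀) : ℝ) : EReal)
          ≤ infConv (gauge' F) f x := le_infConv hterm
      rw [hS, hfx₀]
      have h11 := EReal.sub_le_sub
        (EReal.sub_le_sub h1 (le_refl ((A : ℝ) : EReal)))
        (le_refl ((p (x - x₀) : ℝ) : EReal))
      refine le_trans (le_of_eq ?_) h11
      norm_cast
      ring
    have h6 : ∀ᶠ x in 𝓝[≠] x₀, ‖x - x₀‖ < δ := by
      apply eventually_nhdsWithin_of_eventually_nhds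
      exact Metric.eventually_nhds_iff.mpr
        ⟨δ, hδpos, fun {y} hy => by rwa [dist_eq_norm] at hy⟩
    have hev2 : ∀ᶠ x in 𝓝[≠] x₀, (K : EReal) ≤ (infConv (gauge' F) f x
        - infConv (gauge' F) f x₀ - ((p (x - x₀) : ℝ) : EReal))
        * (((‖x - x₀‖ ^ (1 + s))⁻¹ : ℝ) : EReal) := by
      filter_upwards [h6, self_mem_nhdsWithin] with x h1 h2
      exact hkey x h2 h1
    exact lt_of_lt_of_le (EReal.bot_lt_coe K) (Filter.le_liminf_of_le (by isBoundedDefault) hev2)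
end
end

section
/- Let X be a normed space, Ω a nonempty subset of X, x̄ ∈ Ω, and s > 0. Then the s-Hölder subdifferential of the distance function to Ω at x̄ satisfies ∂_s d(·;Ω)(x̄) = N_s(x̄;Ω) ∩ B*, where N_s(x̄;Ω) := ∂_s δ_Ω(x̄) and B* is the closed unit ball of X*. In particular for s = 1, the proximal subdifferential of the distance function at x̄ equals the proximal normal cone intersected with B*. -/
noncomputable section
open Filter Topology

variable {X : Type*} [NormedAddCommGroup X] [NormedSpace ℝ X]

/-- liminf in EReal is > ⊥ iff there is an eventual real lower bound. -/
lemma bot_lt_liminf_iff' {α : Type*} {F : Filter α} {f : α → EReal} :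
    ⊥ < liminf f F ↔ ∃ m : ℝ, ∀ᶠ x in F, (m : EReal) ≤ f x := by
  constructor
  · intro h
    rw [liminf_eq] at h
    obtain ⟨a, ha, hba⟩ := lt_sSup_iff.mp h
    induction a with
    | bot => exact absurd hba (lt_irrefl _)
    | coe r => exact ⟨r, ha⟩
    | top => exact ⟨0, ha.mono fun x hx => le_trans le_top hx⟩
  · rintro ⟨m, hm⟩
    exact lt_of_lt_of_le (EReal.bot_lt_coe m) (le_liminf_of_le (by isBoundedDefault) hm)

omit [NormedSpace ℝ X] in
lemma eventually_punctured_iff {x₀ : X} {P : X → Prop} :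
    (∀ᶠ x in 𝓝[≠] x₀, P x) ↔ ∃ δ > 0, ∀ x : X, x ≠ x₀ → ‖x - x₀‖ < δ → P x := by
  rw [eventually_nhdsWithin_iff, Metric.eventually_nhds_iff]
  constructor
  · rintro ⟨ε, hε, h⟩
    exact ⟨ε, hε, fun x hne hx => h (by rwa [dist_eq_norm]) hne⟩
  · rintro ⟨δ, hδ, h⟩
    exact ⟨δ, hδ, fun x hx hne => h x hne (by rwa [dist_eq_norm] at hx)⟩

theorem stmt18 (Ω : Set X) (hΩ : Ω.Nonempty) (x₀ : X) (hx₀ : x₀ ∈ Ω) :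
    ∀ s : ℝ, 0 < s →
      holderSub s (fun x => ⨅ ω : Ω, ((‖x - (ω : X)‖ : ℝ) : EReal)) x₀
        = holderSub s (eIndicator Ω) x₀ ∩ {p | ‖p‖ ≤ 1} := by
  intro s hs
  have hΩne : Nonempty Ω := hΩ.to_subtype
  set D : X → ℝ := fun x => Metric.infDist x Ω with hDdef
  have hDco : ∀ x : X, (⨅ ω : Ω, ((‖x - (ω : X)‖ : ℝ) : EReal)) = ((D x : ℝ) : EReal) := by
    intro x
    have : D x = ⨅ ω : Ω, ‖x - (ω : X)‖ := by
      simp only [hDdef, Metric.infDist_eq_iInf, dist_eq_norm]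
    rw [this]
    refine (Monotone.map_ciInf_of_continuousAt ?_ ?_ ?_).symm
    · exact continuous_coe_real_ereal.continuousAt
    · exact fun a b hab => EReal.coe_le_coe_iff.mpr hab
    · exact ⟨0, by rintro y ⟨ω, rfl⟩; exact norm_nonneg _⟩
  have hD0 : D x₀ = 0 := Metric.infDist_zero_of_mem hx₀
  have hDnonneg : ∀ x, 0 ≤ D x := fun x => Metric.infDist_nonneg
  have hDle : ∀ x, D x ≤ ‖x - x₀‖ := fun x => by
    simpa [dist_eq_norm] using Metric.infDist_le_dist_of_mem (x := x) hx₀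
  ext p
  simp only [holderSub, Set.mem_setOf_eq, Set.mem_inter_iff]
  have hfd : ∀ x : X,
      ((⨅ ω : Ω, ((‖x - (ω : X)‖ : ℝ) : EReal)) - (⨅ ω : Ω, ((‖x₀ - (ω : X)‖ : ℝ) : EReal))
        - ((p (x - x₀) : ℝ) : EReal)) * (((‖x - x₀‖ ^ (1 + s))⁻¹ : ℝ) : EReal)
      = (((D x - D x₀ - p (x - x₀)) * (‖x - x₀‖ ^ (1 + s))⁻¹ : ℝ) : EReal) := by
    intro x
    rw [hDco x, hDco x₀]
    norm_cast
  have hfun : (fun x => ((⨅ ω : Ω, ((‖x - (ω : X)‖ : ℝ) : EReal))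
        - (⨅ ω : Ω, ((‖x₀ - (ω : X)‖ : ℝ) : EReal)) - ((p (x - x₀) : ℝ) : EReal))
        * (((‖x - x₀‖ ^ (1 + s))⁻¹ : ℝ) : EReal))
      = fun x => (((D x - D x₀ - p (x - x₀)) * (‖x - x₀‖ ^ (1 + s))⁻¹ : ℝ) : EReal) :=
    funext hfd
  have hfiΩ : ∀ x : X, x ∈ Ω →
      (eIndicator Ω x - eIndicator Ω x₀ - ((p (x - x₀) : ℝ) : EReal))
        * (((‖x - x₀‖ ^ (1 + s))⁻¹ : ℝ) : EReal)
      = (((0 - 0 - p (x - x₀)) * (‖x - x₀‖ ^ (1 + s))⁻¹ : ℝ) : EReal) := by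
    intro x hx
    simp only [eIndicator, if_pos hx, if_pos hx₀]
    rw [← EReal.coe_zero, ← EReal.coe_sub, ← EReal.coe_sub, ← EReal.coe_mul]
  have hfiT : ∀ x : X, x ≠ x₀ → x ∉ Ω →
      (eIndicator Ω x - eIndicator Ω x₀ - ((p (x - x₀) : ℝ) : EReal))
        * (((‖x - x₀‖ ^ (1 + s))⁻¹ : ℝ) : EReal) = ⊤ := by
    intro x hne hx
    have hr : (0:ℝ) < ‖x - x₀‖ := norm_pos_iff.mpr (sub_ne_zero.mpr hne)
    have hrp : (0:ℝ) < (‖x - x₀‖ ^ (1 + s))⁻¹ :=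
      inv_pos.mpr (Real.rpow_pos_of_pos hr _)
    simp only [eIndicator, if_neg hx, if_pos hx₀]
    rw [← EReal.coe_zero, EReal.top_sub_coe, EReal.top_sub_coe,
      EReal.top_mul_of_pos (by exact_mod_cast hrp)]
  constructor
  · -- distance subdifferential ⊆ indicator subdifferential ∩ ball
    intro hp
    rw [hfun] at hp
    obtain ⟨m, hm⟩ := bot_lt_liminf_iff'.mp hp
    constructor
    · rw [bot_lt_liminf_iff']
      refine ⟨m, ?_⟩
      filter_upwards [hm, eventually_mem_nhdsWithin] with x hx hxne
      have hxne' : x ≠ x₀ := hxne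
      by_cases hxΩ : x ∈ Ω
      · rw [hfiΩ x hxΩ]
        have hhx : D x = 0 := Metric.infDist_zero_of_mem hxΩ
        rw [EReal.coe_le_coe_iff] at hx ⊢
        rw [hhx, hD0] at hx
        exact hx
      · rw [hfiT x hxne' hxΩ]; exact le_top
    · -- ‖p‖ ≤ 1
      obtain ⟨δ, hδ, hmδ⟩ := eventually_punctured_iff.mp hm
      have hkey : ∀ u : X, p u ≤ ‖u‖ := by
        intro u
        rcases eq_or_ne u 0 with rfl | hu
        · simp
        have hun : (0:ℝ) < ‖u‖ := norm_pos_iff.mpr hu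
        have hev : ∀ᶠ t in 𝓝[>] (0:ℝ),
            p u ≤ ‖u‖ - m * t ^ s * ‖u‖ ^ (1 + s) := by
          filter_upwards [Ioo_mem_nhdsGT_of_mem (Set.mem_Ico.mpr ⟨le_refl 0, div_pos hδ hun⟩)]
            with t ht
          obtain ⟨ht0, htδ⟩ := ht
          set x := x₀ + t • u with hxdef
          have hxx : x - x₀ = t • u := by simp [hxdef]
          have hnx : ‖x - x₀‖ = t * ‖u‖ := by
            rw [hxx, norm_smul, Real.norm_eq_abs, abs_of_pos ht0]
          have hne : x ≠ x₀ := by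
            intro h
            apply hu
            have h2 : t • u = 0 := by rw [← hxx, h, sub_self]
            simpa [ht0.ne'] using h2
          have hlt : ‖x - x₀‖ < δ := by
            rw [hnx]
            calc t * ‖u‖ < (δ / ‖u‖) * ‖u‖ := mul_lt_mul_of_pos_right htδ hun
            _ = δ := div_mul_cancel₀ _ hun.ne'
          have h1 := hmδ x hne hlt
          rw [EReal.coe_le_coe_iff] at h1
          have hpos : (0:ℝ) < ‖x - x₀‖ ^ (1 + s) :=
            Real.rpow_pos_of_pos (by rw [hnx]; positivity) _
          rw [← div_eq_mul_inv, le_div_iff₀ hpos] at h1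
          have hps : p (x - x₀) = t * p u := by rw [hxx, map_smul, smul_eq_mul]
          have h3 : ‖x - x₀‖ ^ (1+s) = t * t ^ s * ‖u‖ ^ (1+s) := by
            rw [hnx, Real.mul_rpow ht0.le (norm_nonneg u), Real.rpow_add ht0, Real.rpow_one]
          have hDx := hDle x
          rw [hnx] at hDx
          have h4 : t * p u ≤ t * (‖u‖ - m * t ^ s * ‖u‖ ^ (1+s)) := by
            rw [← hps]
            calc p (x - x₀) ≤ D x - D x₀ - m * ‖x - x₀‖ ^ (1+s) := by linarith
            _ ≤ t * ‖u‖ - m * (t * t^s * ‖u‖^(1+s)) := by rw [← h3, hD0]; linarith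
            _ = t * (‖u‖ - m * t ^ s * ‖u‖ ^ (1+s)) := by ring
          exact le_of_mul_le_mul_left h4 ht0
        have htend : Tendsto (fun t : ℝ => ‖u‖ - m * t ^ s * ‖u‖ ^ (1 + s)) (𝓝[>] (0:ℝ))
            (𝓝 ‖u‖) := by
          have h0 : Tendsto (fun t : ℝ => t ^ s) (𝓝[>] (0:ℝ)) (𝓝 (0:ℝ)) := by
            have h1 := (Real.continuousAt_rpow_const 0 s (Or.inr hs.le)).tendsto
            rw [Real.zero_rpow hs.ne'] at h1
            exact h1.mono_left nhdsWithin_le_nhds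
          have h2 : Tendsto (fun t : ℝ => ‖u‖ - m * t ^ s * ‖u‖ ^ (1 + s)) (𝓝[>] (0:ℝ))
              (𝓝 (‖u‖ - m * 0 * ‖u‖ ^ (1 + s))) :=
            Tendsto.sub tendsto_const_nhds ((h0.const_mul m).mul_const _)
          simpa using h2
        exact ge_of_tendsto htend hev
      refine p.opNorm_le_bound zero_le_one fun u => ?_
      rw [one_mul, Real.norm_eq_abs, abs_le]
      refine ⟨?_, hkey u⟩
      have := hkey (-u)
      simp only [map_neg, norm_neg] at this
      linarith
  · -- indicator subdifferential ∩ ball ⊆ distance subdifferential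
    rintro ⟨hpN, hp1⟩
    rw [hfun, bot_lt_liminf_iff']
    obtain ⟨m₀, hm₀⟩ := bot_lt_liminf_iff'.mp hpN
    set m := min m₀ 0 with hmdef
    have hm0 : m ≤ 0 := min_le_right _ _
    have hm : ∀ᶠ x in 𝓝[≠] x₀, (m : EReal) ≤
        (eIndicator Ω x - eIndicator Ω x₀ - ((p (x - x₀) : ℝ) : EReal))
          * (((‖x - x₀‖ ^ (1 + s))⁻¹ : ℝ) : EReal) :=
      hm₀.mono fun x hx =>
        le_trans (EReal.coe_le_coe_iff.mpr (min_le_left _ _)) hx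
    obtain ⟨δ, hδ, hδm⟩ := eventually_punctured_iff.mp hm
    have hstar : ∀ ω ∈ Ω, ‖ω - x₀‖ < δ → m * ‖ω - x₀‖ ^ (1 + s) ≤ -(p (ω - x₀)) := by
      intro ω hω hωδ
      rcases eq_or_ne ω x₀ with rfl | hne
      · simp [Real.zero_rpow (by positivity : (1:ℝ) + s ≠ 0)]
      · have h1 := hδm ω hne hωδ
        rw [hfiΩ ω hω, EReal.coe_le_coe_iff] at h1
        have hpos : (0:ℝ) < ‖ω - x₀‖ ^ (1 + s) :=
          Real.rpow_pos_of_pos (norm_pos_iff.mpr (sub_ne_zero.mpr hne)) _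
        rw [← div_eq_mul_inv, le_div_iff₀ hpos] at h1
        linarith
    refine ⟨m * 3 ^ (1 + s) - 1, ?_⟩
    rw [eventually_punctured_iff]
    refine ⟨min (δ / 3) 1, by positivity, ?_⟩
    intro x hne hxδ
    set r := ‖x - x₀‖ with hrdef
    have hr : 0 < r := norm_pos_iff.mpr (sub_ne_zero.mpr hne)
    have hr3 : r < δ / 3 := lt_of_lt_of_le hxδ (min_le_left _ _)
    have hr1 : r ≤ 1 := le_of_lt (lt_of_lt_of_le hxδ (min_le_right _ _))
    have hrs : r ^ (1+s) ≤ r := by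
      calc r ^ (1+s) ≤ r ^ (1:ℝ) :=
            Real.rpow_le_rpow_of_exponent_ge hr hr1 (by linarith)
      _ = r := Real.rpow_one r
    have hrsp : (0:ℝ) < r ^ (1+s) := Real.rpow_pos_of_pos hr _
    have hlt : Metric.infDist x Ω < D x + r ^ (1+s) := by
      simp only [hDdef]; linarith
    obtain ⟨ω, hω, hωd⟩ := (Metric.infDist_lt_iff hΩ).mp hlt
    rw [dist_eq_norm] at hωd
    have hω3 : ‖ω - x₀‖ < 3 * r := by
      have htri : ‖ω - x₀‖ ≤ ‖ω - x‖ + ‖x - x₀‖ := by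
        have : ω - x₀ = (ω - x) + (x - x₀) := by abel
        rw [this]; exact norm_add_le _ _
      rw [norm_sub_rev (ω) x] at htri
      have hDx := hDle x
      rw [← hrdef] at hDx htri
      linarith
    have hωδ : ‖ω - x₀‖ < δ := by linarith
    have h5 := hstar ω hω hωδ
    have h6 : m * (3*r) ^ (1+s) ≤ m * ‖ω - x₀‖ ^ (1+s) :=
      mul_le_mul_of_nonpos_left
        (Real.rpow_le_rpow (norm_nonneg _) hω3.le (by linarith)) hm0
    have h7 : ((3:ℝ)*r) ^ (1+s) = 3 ^ (1+s) * r ^ (1+s) :=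
      Real.mul_rpow (by norm_num) hr.le
    rw [h7] at h6
    have h8 : p (x - ω) ≤ ‖x - ω‖ := by
      have h81 : p (x - ω) ≤ ‖p (x - ω)‖ := by
        rw [Real.norm_eq_abs]; exact le_abs_self _
      have h82 := p.le_opNorm (x - ω)
      have h83 : ‖p‖ * ‖x - ω‖ ≤ 1 * ‖x - ω‖ :=
        mul_le_mul_of_nonneg_right hp1 (norm_nonneg _)
      linarith
    have h9 : p (x - x₀) = p (x - ω) + p (ω - x₀) := by
      rw [← map_add]; congr 1; abel
    rw [EReal.coe_le_coe_iff, ← div_eq_mul_inv, le_div_iff₀ hrsp]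
    rw [hD0]
    nlinarith [hωd, h5, h6, h8, h9, hrsp.le]
end
end
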